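/- arXiv:1703.01080 — 2 statements merged into one kernel-verified Lean document; each statement's English description precedes it below -/
import Mathlib

section
/- Let q = 2 and let p = 2^n - 1 be a Mersenne prime; set F = F_{2^n}. For every integer k with 1 ≤ k < n, there exists a nonzero polynomial f ∈ F[X] of degree 2^n(1 - 2^{-k}) < p dividing X^p - 1, with wt(f) ≤ (n+1)^k and dim(I_f) = 2^{n-k} - 1 ≤ p/2^k. Consequently, for every δ > 0, if there exist infinitely many Mersenne primes, there exist a finite field F and a prime p with min over nonzero f of (wt(f) + dim(I_f)) ≤ δp. -/
set_option linter.unusedSectionVars false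
set_option linter.unusedVariables false
set_option synthInstance.maxHeartbeats 1000000
set_option maxHeartbeats 1000000

open Polynomial

section Aux
open Finset

open Polynomial Finset

variable {F : Type*} [Field F] [CharP F 2]

/-- Product of `X + C (t + ∑_{j∈s} e j)` over subsets `s` of `J`. -/
noncomputable def subP {n : ℕ} (e : Fin n → F) (J : Finset (Fin n)) (t : F) : F[X] :=
  ∏ s ∈ J.powerset, (X + C (t + ∑ j ∈ s, e j))

variable {n : ℕ} {e : Fin n → F}

lemma subP_insert {J : Finset (Fin n)} {a : Fin n} (ha : a ∉ J) (t : F) :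
    subP e (insert a J) t = subP e J t * subP e J (t + e a) := by
  unfold subP
  rw [Finset.powerset_insert, Finset.prod_union, Finset.prod_image]
  · congr 1
    refine Finset.prod_congr rfl fun s hs => ?_
    rw [Finset.sum_insert fun h => ha (Finset.mem_powerset.1 hs h)]
    ring_nf
  · intro s hs u hu h
    have has : a ∉ s := fun h' => ha (Finset.mem_powerset.1 hs h')
    have hau : a ∉ u := fun h' => ha (Finset.mem_powerset.1 hu h')
    rw [← Finset.erase_insert has, ← Finset.erase_insert hau, h]
  · simp only [Finset.disjoint_left, Finset.mem_image, Finset.mem_powerset]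
    rintro s hs ⟨u, hu, rfl⟩
    exact ha (hs (Finset.mem_insert_self a u))

lemma subP_monic (J : Finset (Fin n)) (t : F) : (subP e J t).Monic :=
  monic_prod_of_monic _ _ fun s _ => monic_X_add_C _

lemma subP_natDegree (J : Finset (Fin n)) (t : F) :
    (subP e J t).natDegree = 2 ^ J.card := by
  rw [subP, natDegree_prod _ _ fun s _ => (monic_X_add_C _).ne_zero]
  simp only [natDegree_X_add_C]
  rw [Finset.sum_const, smul_eq_mul, mul_one, Finset.card_powerset]

lemma subP_eval (J : Finset (Fin n)) (t x : F) :
    (subP e J t).eval x = ∏ s ∈ J.powerset, (x + t + ∑ j ∈ s, e j) := by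
  simp only [subP, eval_prod, eval_add, eval_X, eval_C]
  exact Finset.prod_congr rfl fun s _ => by ring

lemma subP_eval_zero (J : Finset (Fin n)) : (subP e J 0).eval 0 = 0 := by
  rw [subP_eval]
  exact Finset.prod_eq_zero (Finset.empty_mem_powerset J) (by simp)

lemma subP_shift (J : Finset (Fin n)) : ∀ t : F,
    subP e J t = subP e J 0 + C ((subP e J 0).eval t) := by
  classical
  induction J using Finset.induction with
  | empty => intro t; simp [subP]
  | @insert a J ha IH =>
      have hq0 : (subP e J 0).eval 0 = 0 := subP_eval_zero J
      have hadd : ∀ x y : F, (subP e J 0).eval (x + y)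
          = (subP e J 0).eval x + (subP e J 0).eval y := by
        intro x y
        have h1 : (subP e J x).eval y = (subP e J 0).eval y + (subP e J 0).eval x := by
          rw [IH x]; simp
        have h2 : (subP e J x).eval y = (subP e J (x + y)).eval 0 := by
          rw [subP_eval, subP_eval]
          exact Finset.prod_congr rfl fun s _ => by ring
        have h3 : (subP e J (x + y)).eval 0 = (subP e J 0).eval (x + y) := by
          rw [IH (x + y)]; simp [hq0]
        rw [← h3, ← h2, h1, add_comm]
      intro t
      have h2 : (2 : F[X]) = 0 := by
        have := CharP.cast_eq_zero F[X] 2; simpa using this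
      rw [subP_insert ha, subP_insert ha, zero_add, IH t, IH (t + e a), IH (e a),
        eval_mul, eval_add, eval_C, hadd t (e a), C_mul, C_add]
      linear_combination (subP e J 0 * C ((subP e J 0).eval t)) * h2

lemma subP_linearized (J : Finset (Fin n)) :
    ∃ c : ℕ → F, subP e J 0 = ∑ j ∈ range (J.card + 1), C (c j) * X ^ (2 ^ j) := by
  classical
  induction J using Finset.induction with
  | empty =>
      refine ⟨fun _ => 1, ?_⟩
      simp [subP]
  | @insert a J ha IH =>
      obtain ⟨c, hc⟩ := IH
      set Q := subP e J 0 with hQ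
      set qa := Q.eval (e a) with hqa
      set m := J.card with hm
      refine ⟨fun j => (if j = 0 then 0 else (c (j - 1)) ^ 2) +
        qa * (if j ≤ m then c j else 0), ?_⟩
      have hdeg : subP e (insert a J) 0 = Q ^ 2 + C qa * Q := by
        rw [subP_insert ha, zero_add, subP_shift J (e a)]
        ring
      have hsq : Q ^ 2 = ∑ j ∈ range (m + 1), C ((c j) ^ 2) * X ^ (2 ^ (j + 1)) := by
        rw [hc, sum_pow_char 2]
        refine Finset.sum_congr rfl fun j _ => ?_
        rw [mul_pow, ← C_pow, ← pow_mul, ← pow_succ]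
      rw [hdeg, Finset.card_insert_of_notMem ha]
      have hrw : ∀ j : ℕ, C ((if j = 0 then 0 else (c (j - 1)) ^ 2) +
            qa * (if j ≤ m then c j else 0)) * X ^ (2 ^ j)
          = C (if j = 0 then 0 else (c (j - 1)) ^ 2) * X ^ (2 ^ j)
            + C (qa * (if j ≤ m then c j else 0)) * X ^ (2 ^ j) := by
        intro j; rw [C_add, add_mul]
      rw [Finset.sum_congr rfl fun j _ => hrw j, Finset.sum_add_distrib]
      congr 1
      · -- first sum equals Q^2
        rw [hsq]
        conv_rhs => rw [Finset.sum_range_succ']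
        simp [hm]
      · -- second sum equals C qa * Q
        conv_rhs => rw [Finset.sum_range_succ]
        rw [if_neg (by omega : ¬ (m + 1 ≤ m)), mul_zero, C_0, zero_mul, add_zero,
          hc, Finset.mul_sum]
        refine Finset.sum_congr rfl fun j hj => ?_
        rw [Finset.mem_range] at hj
        rw [if_pos (by omega : j ≤ m), C_mul]
        ring

lemma subP_card_support (J : Finset (Fin n)) (t : F) :
    (subP e J t).support.card ≤ J.card + 2 := by
  classical
  obtain ⟨c, hc⟩ := subP_linearized (e := e) J
  have key : ∃ v : F, subP e J t = ∑ j ∈ range (J.card + 1), C (c j) * X ^ (2 ^ j) + C v := by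
    refine ⟨(∑ j ∈ range (J.card + 1), C (c j) * X ^ (2 ^ j)).eval t, ?_⟩
    rw [subP_shift J t, hc]
  obtain ⟨v, hv⟩ := key
  rw [hv]
  have hsub : (∑ j ∈ range (J.card + 1), C (c j) * X ^ (2 ^ j)
      + C v).support
      ⊆ (range (J.card + 1)).image (fun j => 2 ^ j) ∪ {0} := by
    intro m hm
    rw [mem_support_iff] at hm
    by_contra hmem
    simp only [Finset.mem_union, Finset.mem_image, Finset.mem_range,
      Finset.mem_singleton, not_or, not_exists, not_and] at hmem
    apply hm
    rw [coeff_add, finset_sum_coeff, coeff_C, if_neg hmem.2]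
    rw [Finset.sum_eq_zero fun j hj => ?_, add_zero]
    rw [coeff_C_mul, coeff_X_pow, if_neg (fun h => hmem.1 j (Finset.mem_range.1 hj) h.symm), mul_zero]
  calc (_ : Finset ℕ).card ≤ _ := Finset.card_le_card hsub
    _ ≤ ((range (J.card + 1)).image (fun j => 2 ^ j)).card + 1 := by
        apply (Finset.card_union_le _ _).trans; simp
    _ ≤ (J.card + 1) + 1 := by
        exact Nat.add_le_add_right ((Finset.card_image_le).trans (by simp)) 1

open Polynomial
lemma finrank_span_mk {F : Type*} [Field F] {f h : F[X]} (hf : f ≠ 0) (hh : h ≠ 0) :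
    Module.finrank F
      (Ideal.span {Ideal.Quotient.mk (Ideal.span {f * h}) f}) = h.natDegree := by
  set I : Ideal F[X] := Ideal.span {f * h} with hI
  let φ : F[X] →ₗ[F] (F[X] ⧸ I) :=
    (Ideal.Quotient.mkₐ F I).toLinearMap.comp (LinearMap.mulLeft F f)
  have hφ : ∀ u : F[X], φ u = Ideal.Quotient.mk I (f * u) := fun u => rfl
  have hker : LinearMap.ker φ = Submodule.restrictScalars F (Ideal.span {h}) := by
    ext u
    simp only [LinearMap.mem_ker, hφ, Submodule.restrictScalars_mem,
      Ideal.Quotient.eq_zero_iff_mem, hI, Ideal.mem_span_singleton]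
    constructor
    · rintro ⟨v, hv⟩
      exact ⟨v, mul_left_cancel₀ hf (by linear_combination hv)⟩
    · rintro ⟨v, rfl⟩
      exact ⟨v, by ring⟩
  have hrange : LinearMap.range φ =
      Submodule.restrictScalars F (Ideal.span {Ideal.Quotient.mk I f}) := by
    ext x
    simp only [LinearMap.mem_range, hφ, Submodule.restrictScalars_mem,
      Ideal.mem_span_singleton']
    constructor
    · rintro ⟨u, rfl⟩
      exact ⟨Ideal.Quotient.mk I u, by rw [← map_mul, mul_comm]⟩
    · rintro ⟨r, rfl⟩
      obtain ⟨u, rfl⟩ := Ideal.Quotient.mk_surjective (I := I) r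
      exact ⟨u, by rw [← map_mul, mul_comm]⟩
  have e1 : (Submodule.restrictScalars F (Ideal.span {Ideal.Quotient.mk I f})) ≃ₗ[F]
      (Ideal.span {Ideal.Quotient.mk I f}) :=
    (Submodule.restrictScalarsEquiv F _ _ _).restrictScalars F
  have e2 : (F[X] ⧸ LinearMap.ker φ) ≃ₗ[F] LinearMap.range φ := φ.quotKerEquivRange
  have e3 : (F[X] ⧸ Submodule.restrictScalars F (Ideal.span {h})) ≃ₗ[F]
      (F[X] ⧸ Ideal.span {h}) := Submodule.Quotient.restrictScalarsEquiv F _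
  have key : Module.finrank F (Ideal.span {Ideal.Quotient.mk I f})
      = Module.finrank F (F[X] ⧸ Ideal.span {h}) := by
    rw [← e1.finrank_eq, ← hrange, ← e2.finrank_eq, hker, e3.finrank_eq]
  rw [key]
  have : Module.finrank F (AdjoinRoot h) = h.natDegree := by
    rw [(AdjoinRoot.powerBasis hh).finrank]
    rfl
  exact this

lemma support_prod_card_le {F : Type*} [Field F] {ι : Type*} (s : Finset ι) (g : ι → F[X]) :
    (∏ i ∈ s, g i).support.card ≤ ∏ i ∈ s, (g i).support.card := by
  classical
  induction s using Finset.cons_induction with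
  | empty =>
      rw [Finset.prod_empty, Finset.prod_empty, ← Polynomial.C_1,
        Polynomial.support_C one_ne_zero, Finset.card_singleton]
  | cons a s ha IH =>
      rw [Finset.prod_cons, Finset.prod_cons]
      exact card_support_mul_le.trans (Nat.mul_le_mul le_rfl IH)

lemma sum_basis_inj {F : Type*} [AddCommGroup F] [Module (ZMod 2) F] {n : ℕ}
    (e : Module.Basis (Fin n) (ZMod 2) F)
    {s t : Finset (Fin n)} (h : ∑ j ∈ s, e j = ∑ j ∈ t, e j) : s = t := by
  have key : ∀ u : Finset (Fin n),
      ∑ j ∈ u, e j = e.equivFun.symm (fun j => if j ∈ u then 1 else 0) := by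
    intro u
    rw [Module.Basis.equivFun_symm_apply]
    have h1 : ∀ j : Fin n, (if j ∈ u then (1 : ZMod 2) else 0) • e j
        = (if j ∈ u then e j else 0) := by
      intro j; split <;> simp
    rw [Finset.sum_congr rfl fun j _ => h1 j, Finset.sum_ite_mem, Finset.univ_inter]
  rw [key s, key t] at h
  have h2 := e.equivFun.symm.injective h
  ext j
  have h3 := congrFun h2 j
  by_cases hs : j ∈ s <;> by_cases ht : j ∈ t <;>
    simp [hs, ht] at h3 ⊢
lemma aux_sum (n : ℕ) : ∀ k, k ≤ n → ∑ i ∈ range k, 2 ^ (n - 1 - i) = 2 ^ n - 2 ^ (n - k) := by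
  intro k
  induction k with
  | zero => simp
  | succ k IH =>
      intro hk
      rw [Finset.sum_range_succ, IH (by omega)]
      have h1 : n - k = (n - 1 - k) + 1 := by omega
      have h2 : 2 ^ (n - k) = 2 * 2 ^ (n - 1 - k) := by rw [h1, pow_succ]; ring
      have h3 : 2 ^ (n - k) ≤ 2 ^ n := Nat.pow_le_pow_right (by norm_num) (by omega)
      have h4 : n - (k+1) = n - 1 - k := by omega
      rw [h4]
      omega

theorem galois_main (n k : ℕ) (hk1 : 1 ≤ k) (hkn : k < n) :
    ∃ f : Polynomial (GaloisField 2 n), f ≠ 0 ∧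
      f.natDegree = 2 ^ n - 2 ^ (n - k) ∧
      f ∣ (X : Polynomial (GaloisField 2 n)) ^ (2 ^ n - 1) - 1 ∧
      f.support.card ≤ (n + 1) ^ k ∧
      ∃ h : Polynomial (GaloisField 2 n),
        (X : Polynomial (GaloisField 2 n)) ^ (2 ^ n - 1) - 1 = f * h ∧
        h.natDegree = 2 ^ (n - k) - 1 := by
  classical
  have hn : n ≠ 0 := by omega
  haveI : Fact (Nat.Prime 2) := ⟨Nat.prime_two⟩
  set F := GaloisField 2 n with hF
  haveI : Fintype F := Fintype.ofFinite F
  have hcard : Fintype.card F = 2 ^ n := by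
    rw [← Nat.card_eq_fintype_card]; exact GaloisField.card 2 n hn
  have hfr : Module.finrank (ZMod 2) F = n := GaloisField.finrank 2 hn
  let e : Module.Basis (Fin n) (ZMod 2) F := (Module.finBasis (ZMod 2) F).reindex (finCongr hfr)
  set J : ℕ → Finset (Fin n) := fun i => univ.filter (fun j => i < j.val) with hJ
  have hJcard : ∀ i, i < n → (J i).card = n - 1 - i := by
    intro i hi
    have : J i = Finset.Ioi (⟨i, hi⟩ : Fin n) := by
      ext j; simp [hJ, Finset.mem_Ioi, Fin.lt_def]
    rw [this, Fin.card_Ioi]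
  set f : F[X] := ∏ i : Fin k, subP e (J i) (e (i.castLE hkn.le)) with hf
  have hmonic : f.Monic := monic_prod_of_monic _ _ fun i _ => subP_monic _ _
  have hne : f ≠ 0 := hmonic.ne_zero
  -- degree
  have hdeg : f.natDegree = 2 ^ n - 2 ^ (n - k) := by
    rw [hf, natDegree_prod _ _ fun i _ => (subP_monic _ _).ne_zero]
    have : ∀ i : Fin k, (subP e (J i) (e (i.castLE hkn.le))).natDegree = 2 ^ (n - 1 - i) := by
      intro i
      rw [subP_natDegree, hJcard i (lt_trans i.2 hkn)]
    rw [Finset.sum_congr rfl fun i _ => this i]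
    rw [Fin.sum_univ_eq_sum_range (fun i => 2 ^ (n - 1 - i)) k]
    exact aux_sum n k hkn.le
  -- weight
  have hwt : f.support.card ≤ (n + 1) ^ k := by
    refine (support_prod_card_le _ _).trans ?_
    calc ∏ i : Fin k, (subP e (J i) (e (i.castLE hkn.le))).support.card
        ≤ ∏ _i : Fin k, (n + 1) := Finset.prod_le_prod (fun _ _ => Nat.zero_le _)
          (fun i _ => by
            refine (subP_card_support _ _).trans ?_
            rw [hJcard i (lt_trans i.2 hkn)]
            omega)
      _ = (n + 1) ^ k := by rw [Finset.prod_const, Finset.card_univ, Fintype.card_fin]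
  -- the roots, as a sigma finset
  set T : Finset (Σ _ : Fin k, Finset (Fin n)) :=
    (univ : Finset (Fin k)).sigma (fun i => (J (i : ℕ)).powerset) with hT
  set r : (Σ _ : Fin k, Finset (Fin n)) → F :=
    fun x => ∑ j ∈ insert (x.1.castLE hkn.le) x.2, e j with hr
  have hnotmem : ∀ x : (Σ _ : Fin k, Finset (Fin n)), x ∈ T →
      (x.1.castLE hkn.le) ∉ x.2 := by
    rintro ⟨i, s⟩ hx
    simp only [hT, Finset.mem_sigma, Finset.mem_powerset] at hx
    intro hmem
    have := hx.2 hmem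
    simp only [hJ, Finset.mem_filter] at this
    exact absurd this.2 (by simp [Fin.castLE])
  have hfT : f = ∏ x ∈ T, (X + C (r x)) := by
    rw [hT, Finset.prod_sigma, hf]
    refine Finset.prod_congr rfl fun i _ => ?_
    rw [subP]
    refine Finset.prod_congr rfl fun s hs => ?_
    have hnm : (i.castLE hkn.le) ∉ s := by
      intro hmem
      have := Finset.mem_powerset.1 hs hmem
      simp only [hJ, Finset.mem_filter] at this
      exact absurd this.2 (by simp [Fin.castLE])
    have : r ⟨i, s⟩ = e (i.castLE hkn.le) + ∑ j ∈ s, e j := by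
      simp only [hr]
      rw [Finset.sum_insert hnm]
    rw [this]
  have hinj : ∀ x ∈ T, ∀ y ∈ T, r x = r y → x = y := by
    rintro ⟨i, s⟩ hx ⟨i', s'⟩ hy hxy
    have hins := sum_basis_inj e hxy
    have hii' : i.castLE hkn.le = i'.castLE hkn.le := by
      by_contra hne'
      have h1 : (i.castLE hkn.le : Fin n) ∈ insert (i'.castLE hkn.le) s' := by
        rw [← hins]; exact Finset.mem_insert_self _ _
      have h2 : (i'.castLE hkn.le : Fin n) ∈ insert (i.castLE hkn.le) s := by
        rw [hins]; exact Finset.mem_insert_self _ _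
      rw [Finset.mem_insert] at h1 h2
      rcases h1 with h1 | h1
      · exact hne' h1
      rcases h2 with h2 | h2
      · exact hne' h2.symm
      -- i ∈ s' means i' < i ; i' ∈ s means i < i'
      simp only [hT, Finset.mem_sigma, Finset.mem_powerset] at hx hy
      have hv1 := hy.2 h1; have hv2 := hx.2 h2
      simp only [hJ, Finset.mem_filter] at hv1 hv2
      simp only [Fin.coe_castLE] at hv1 hv2
      omega
    have hii : i = i' := by
      apply Fin.ext
      have := congrArg Fin.val hii'
      simpa using this
    subst hii
    have hss : s = s' := by
      have h1 := hnotmem ⟨i, s⟩ hx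
      have h2 := hnotmem ⟨i, s'⟩ hy
      have := congrArg (fun u => Finset.erase u (i.castLE hkn.le)) hins
      simpa [Finset.erase_insert h1, Finset.erase_insert h2] using this
    rw [hss]
  have hne0 : ∀ x ∈ T, r x ≠ 0 := by
    rintro ⟨i, s⟩ hx h0
    have : (∅ : Finset (Fin n)) = insert (i.castLE hkn.le) s := by
      apply sum_basis_inj e
      rw [Finset.sum_empty, ← h0]
    exact absurd this.symm (Finset.insert_ne_empty _ _)
  -- product formula for X^(q-1) - 1
  have hq1 : 1 < Fintype.card F := Fintype.one_lt_card
  have huniv : ∏ a ∈ (univ : Finset F), (X - C a) = X ^ (Fintype.card F) - X := by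
    have hm : (X ^ (Fintype.card F) - X : F[X]).Monic := by
      apply monic_X_pow_sub
      rw [degree_X]
      exact_mod_cast hq1
    have hroots := FiniteField.roots_X_pow_card_sub_X F
    have hcardroots : Multiset.card (X ^ Fintype.card F - X : F[X]).roots
        = (X ^ Fintype.card F - X : F[X]).natDegree := by
      rw [hroots, FiniteField.X_pow_card_sub_X_natDegree_eq F hq1]
      simp [Finset.card_univ]
    have hprod := prod_multiset_X_sub_C_of_monic_of_roots_card_eq hm hcardroots
    rw [hroots] at hprod
    rw [← hprod]
    rfl
  have hp1 : 1 ≤ 2 ^ n := Nat.one_le_two_pow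
  have herase : (X : F[X]) ^ (2 ^ n - 1) - 1 = ∏ a ∈ (univ : Finset F).erase 0, (X - C a) := by
    have h0 : (X : F[X]) * ∏ a ∈ (univ : Finset F).erase 0, (X - C a)
        = X ^ (Fintype.card F) - X := by
      rw [← huniv, ← Finset.mul_prod_erase univ _ (Finset.mem_univ (0 : F)), C_0, sub_zero]
    have hexp : 2 ^ n - 1 + 1 = 2 ^ n := by omega
    have h1 : (X : F[X]) * ((X : F[X]) ^ (2 ^ n - 1) - 1) = X ^ (Fintype.card F) - X := by
      rw [hcard, mul_sub, mul_one, ← pow_succ', hexp]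
    exact mul_left_cancel₀ X_ne_zero (h1.trans h0.symm)
  have hXC : ∀ a : F, (X - C a : F[X]) = X + C a := by
    intro a
    rw [sub_eq_add_neg, ← C_neg, CharTwo.neg_eq]
  have himg : f = ∏ a ∈ T.image r, (X - C a) := by
    rw [Finset.prod_image hinj, hfT]
    exact Finset.prod_congr rfl fun x _ => by rw [hXC]
  have hsubset : T.image r ⊆ (univ : Finset F).erase 0 := by
    intro a ha
    obtain ⟨x, hx, rfl⟩ := Finset.mem_image.1 ha
    exact Finset.mem_erase.2 ⟨hne0 x hx, Finset.mem_univ _⟩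
  have hdvd : f ∣ (X : F[X]) ^ (2 ^ n - 1) - 1 := by
    rw [herase, himg]
    exact Finset.prod_dvd_prod_of_subset _ _ _ hsubset
  obtain ⟨h, hh⟩ := hdvd
  have hpne : (2 ^ n - 1 : ℕ) ≠ 0 := by
    have : 2 ^ n ≥ 2 ^ 1 := Nat.pow_le_pow_right (by norm_num) (by omega)
    omega
  have hXp_deg : ((X : F[X]) ^ (2 ^ n - 1) - 1).natDegree = 2 ^ n - 1 := by
    rw [← C_1, natDegree_X_pow_sub_C]
  have hXp_ne : (X : F[X]) ^ (2 ^ n - 1) - 1 ≠ 0 := by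
    rw [← C_1]
    exact (monic_X_pow_sub_C 1 hpne).ne_zero
  have hh_ne : h ≠ 0 := by
    intro h0
    rw [h0, mul_zero] at hh
    exact hXp_ne hh
  have hdegh : h.natDegree = 2 ^ (n - k) - 1 := by
    have hmul : ((X : F[X]) ^ (2 ^ n - 1) - 1).natDegree = f.natDegree + h.natDegree := by
      rw [hh, natDegree_mul hne hh_ne]
    rw [hXp_deg, hdeg] at hmul
    have h1 : 2 ^ (n - k) ≤ 2 ^ n := Nat.pow_le_pow_right (by norm_num) (by omega)
    have h2 : 1 ≤ 2 ^ (n - k) := Nat.one_le_two_pow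
    omega
  exact ⟨f, hne, hdeg, ⟨h, hh⟩, hwt, h, hh, hdegh⟩



end Aux

open Finset in
/-- For `F = F_{2^n}` with `p = 2^n - 1` a Mersenne prime and `1 ≤ k < n`, there is a
nonzero divisor `f` of `X^p - 1` of degree `2^n - 2^{n-k}` with `wt(f) ≤ (n+1)^k` and
`dim I_f = 2^{n-k} - 1 ≤ p/2^k`.  Consequently, if there are infinitely many Mersenne
primes then for every `δ > 0` there are a finite field `F` and a prime `p` with a
nonzero `f` of degree `< p` satisfying `wt(f) + dim I_f ≤ δp`. -/
theorem no_uniform_weak_uncertainty :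
    (∀ n : ℕ, (2 ^ n - 1).Prime → ∀ k : ℕ, 1 ≤ k → k < n →
      ∃ f : Polynomial (GaloisField 2 n), f ≠ 0 ∧
        f.natDegree = 2 ^ n - 2 ^ (n - k) ∧
        f ∣ (X : Polynomial (GaloisField 2 n)) ^ (2 ^ n - 1) - 1 ∧
        f.support.card ≤ (n + 1) ^ k ∧
        Module.finrank (GaloisField 2 n)
          (Ideal.span {Ideal.Quotient.mk
            (Ideal.span {(X : Polynomial (GaloisField 2 n)) ^ (2 ^ n - 1) - 1}) f})
          = 2 ^ (n - k) - 1 ∧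
        2 ^ (n - k) - 1 ≤ (2 ^ n - 1) / 2 ^ k) ∧
    ((∀ N : ℕ, ∃ n : ℕ, N < n ∧ (2 ^ n - 1).Prime) →
      ∀ δ : ℝ, 0 < δ → ∃ n p : ℕ, p.Prime ∧ p = 2 ^ n - 1 ∧
        ∃ f : Polynomial (GaloisField 2 n), f ≠ 0 ∧ f.natDegree < p ∧
          ((f.support.card : ℝ) +
            (Module.finrank (GaloisField 2 n)
              (Ideal.span {Ideal.Quotient.mk
                (Ideal.span {(X : Polynomial (GaloisField 2 n)) ^ p - 1}) f}) : ℝ))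
            ≤ δ * p) := by
  have partA : ∀ n : ℕ, ∀ k : ℕ, 1 ≤ k → k < n →
      ∃ f : Polynomial (GaloisField 2 n), f ≠ 0 ∧
        f.natDegree = 2 ^ n - 2 ^ (n - k) ∧
        f ∣ (X : Polynomial (GaloisField 2 n)) ^ (2 ^ n - 1) - 1 ∧
        f.support.card ≤ (n + 1) ^ k ∧
        Module.finrank (GaloisField 2 n)
          (Ideal.span {Ideal.Quotient.mk
            (Ideal.span {(X : Polynomial (GaloisField 2 n)) ^ (2 ^ n - 1) - 1}) f})
          = 2 ^ (n - k) - 1 ∧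
        2 ^ (n - k) - 1 ≤ (2 ^ n - 1) / 2 ^ k := by
    intro n k hk1 hkn
    obtain ⟨f, hne, hdeg, hdvd, hwt, h, hh, hdegh⟩ := galois_main n k hk1 hkn
    have hXp_ne : (X : Polynomial (GaloisField 2 n)) ^ (2 ^ n - 1) - 1 ≠ 0 := by
      have hpne : (2 ^ n - 1 : ℕ) ≠ 0 := by
        have : (2:ℕ) ^ 1 ≤ 2 ^ n := Nat.pow_le_pow_right (by norm_num) (by omega)
        simp only [pow_one] at this
        omega
      rw [← C_1]
      exact (monic_X_pow_sub_C 1 hpne).ne_zero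
    have hh_ne : h ≠ 0 := by
      intro h0
      rw [h0, mul_zero] at hh
      exact hXp_ne hh
    refine ⟨f, hne, hdeg, hdvd, hwt, ?_, ?_⟩
    · rw [hh, finrank_span_mk hne hh_ne, hdegh]
    · have hmul : (2 ^ (n - k) - 1) * 2 ^ k = 2 ^ n - 2 ^ k := by
        rw [Nat.sub_mul, one_mul, ← pow_add]
        congr 2
        omega
      have h1 : (1:ℕ) ≤ 2 ^ k := Nat.one_le_two_pow
      have h2 : (2:ℕ) ^ k ≤ 2 ^ n := Nat.pow_le_pow_right (by norm_num) (by omega)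
      rw [Nat.le_div_iff_mul_le (Nat.two_pow_pos k)]
      omega
  refine ⟨fun n _ k hk1 hkn => partA n k hk1 hkn, ?_⟩
  intro hinf δ hδ
  obtain ⟨k0, hk0⟩ := pow_unbounded_of_one_lt (4 / δ) (by norm_num : (1:ℝ) < 2)
  set k := k0 + 1 with hk
  have hk4 : 4 / δ < 2 ^ k :=
    lt_of_lt_of_le hk0 (pow_le_pow_right₀ (by norm_num) (by omega))
  have hk4' : 4 < δ * 2 ^ k := by
    rw [div_lt_iff₀ hδ] at hk4
    linarith
  -- tendsto: (n+1)^k / 2^n → 0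
  have t0 : Filter.Tendsto (fun m : ℕ => (m : ℝ) ^ k / 2 ^ m) Filter.atTop (nhds 0) :=
    tendsto_pow_const_div_const_pow_of_one_lt k (by norm_num)
  have t1 : Filter.Tendsto (fun m : ℕ => ((m : ℝ) + 1) ^ k / 2 ^ (m + 1))
      Filter.atTop (nhds 0) := by
    have := t0.comp (Filter.tendsto_add_atTop_nat 1)
    refine this.congr fun m => ?_
    simp [Function.comp]
  have t2 : Filter.Tendsto (fun m : ℕ => ((m : ℝ) + 1) ^ k / 2 ^ m)
      Filter.atTop (nhds 0) := by
    have h2 := t1.const_mul (2 : ℝ)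
    rw [mul_zero] at h2
    refine h2.congr fun m => ?_
    rw [pow_succ]
    field_simp
    ring
  have hev : ∀ᶠ m : ℕ in Filter.atTop, ((m : ℝ) + 1) ^ k / 2 ^ m < δ / 4 :=
    t2.eventually (gt_mem_nhds (by positivity))
  obtain ⟨N, hN⟩ := Filter.eventually_atTop.1 hev
  obtain ⟨n, hn_gt, hprime⟩ := hinf (max N k)
  have hNn : N ≤ n := le_trans (le_max_left _ _) hn_gt.le
  have hkn : k < n := lt_of_le_of_lt (le_max_right _ _) hn_gt
  have hk1 : 1 ≤ k := by omega
  obtain ⟨f, hne, hdeg, _, hwt, hfrk, _⟩ := partA n k hk1 hkn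
  refine ⟨n, 2 ^ n - 1, hprime, rfl, f, hne, ?_, ?_⟩
  · -- degree < p
    have h2 : (2:ℕ) ^ 1 ≤ 2 ^ (n - k) := Nat.pow_le_pow_right (by norm_num) (by omega)
    have h3 : (2:ℕ) ^ (n - k) ≤ 2 ^ n := Nat.pow_le_pow_right (by norm_num) (by omega)
    simp only [pow_one] at h2
    omega
  · -- the bound
    rw [hfrk]
    have hp1 : (1:ℕ) ≤ 2 ^ n := Nat.one_le_two_pow
    have hcast : ((2 ^ n - 1 : ℕ) : ℝ) = 2 ^ n - 1 := by
      push_cast [Nat.cast_sub hp1]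
      norm_num
    have hcast2 : ((2 ^ (n - k) - 1 : ℕ) : ℝ) ≤ 2 ^ (n - k) := by
      calc ((2 ^ (n - k) - 1 : ℕ) : ℝ) ≤ ((2 ^ (n - k) : ℕ) : ℝ) := by
            exact_mod_cast Nat.sub_le _ _
        _ = 2 ^ (n - k) := by push_cast; ring
    have hwtR : (f.support.card : ℝ) ≤ ((n : ℝ) + 1) ^ k := by
      calc (f.support.card : ℝ) ≤ (((n + 1) ^ k : ℕ) : ℝ) := by exact_mod_cast hwt
        _ = ((n : ℝ) + 1) ^ k := by push_cast; ring
    have hNbound := hN n hNn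
    have h2npos : (0:ℝ) < 2 ^ n := by positivity
    have hwt2 : ((n : ℝ) + 1) ^ k < δ / 4 * 2 ^ n := by
      rw [div_lt_iff₀ h2npos] at hNbound
      linarith
    have hsplit : (2:ℝ) ^ n = 2 ^ k * 2 ^ (n - k) := by
      rw [← pow_add]
      congr 1
      omega
    have hdpos : (0:ℝ) < 2 ^ (n - k) := by positivity
    have hdim2 : (2:ℝ) ^ (n - k) ≤ δ / 4 * 2 ^ n := by
      rw [hsplit]
      nlinarith [mul_lt_mul_of_pos_left hk4' hdpos]
    have h2n2 : (2:ℝ) ≤ 2 ^ n := by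
      calc (2:ℝ) = 2 ^ 1 := by norm_num
        _ ≤ 2 ^ n := by
            apply pow_le_pow_right₀ (by norm_num)
            omega
    rw [hcast]
    nlinarith [hwtR, hcast2, hwt2, hdim2]
end

section
/- Let q < p be distinct primes, r = ord_p(q), F = F_q, E = F_{q^r}, and T = Σ_{i=0}^{r-1} X^{q^i} ∈ F[X] the trace polynomial. Then there exists α ∈ F_q such that the polynomial f = T + α vanishes at at least p/q of the p-th roots of unity in E; consequently wt(f) + dim_F(I_f) ≤ r + 1 + (1 - 1/q)p, so if r < p/q the uncertainty principle wt(f) + dim(I_f) ≥ p + 1 fails over E. -/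
open Polynomial
open scoped BigOperators

set_option maxHeartbeats 1000000 in
set_option synthInstance.maxHeartbeats 400000 in
lemma key_dim_bound (E : Type*) [Field E] (n : ℕ) (hn : 0 < n) (g : E[X]) (S : Finset E)
    (hroot : ∀ μ ∈ S, μ ^ n = 1) (hvan : ∀ μ ∈ S, g.eval μ = 0) :
    Module.finrank E (Ideal.span {Ideal.Quotient.mk (Ideal.span {(X : E[X]) ^ n - 1}) g}) +
      S.card ≤ n := by
  set I : Ideal E[X] := Ideal.span {(X : E[X]) ^ n - 1} with hI
  have hdeg : ((X : E[X]) ^ n - 1).natDegree = n := by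
    rw [show ((X : E[X]) ^ n - 1) = X ^ n - C 1 by rw [map_one]]
    exact natDegree_X_pow_sub_C
  have hne : (X : E[X]) ^ n - 1 ≠ 0 := by
    intro h
    rw [h, natDegree_zero] at hdeg
    omega
  -- the evaluation alg hom
  have hgen : ∀ μ : S, (aeval (μ : E)) ((X : E[X]) ^ n - 1) = 0 := by
    rintro ⟨μ, hμ⟩
    simp [hroot μ hμ]
  set Φ : E[X] →ₐ[E] (S → E) := Pi.algHom E _ (fun μ : S => aeval (μ : E)) with hΦ
  have hker : ∀ a ∈ I, Φ a = 0 := by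
    intro a ha
    obtain ⟨c, rfl⟩ := Ideal.mem_span_singleton'.mp ha
    funext μ
    have := hgen μ
    simp only [map_one, map_sub, map_pow, aeval_X] at this
    simp [hΦ, this, sub_eq_zero.mpr]
  set ev : (E[X] ⧸ I) →ₗ[E] (S → E) := (Ideal.Quotient.liftₐ I Φ hker).toLinearMap with hev
  haveI : Module.Finite E (E[X] ⧸ I) := (AdjoinRoot.powerBasis hne).finite
  have hfr : Module.finrank E (E[X] ⧸ I) = n := by
    have h2 := (AdjoinRoot.powerBasis hne).finrank
    rw [AdjoinRoot.powerBasis_dim, hdeg] at h2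
    exact h2
  -- surjectivity of ev
  have hsurj : Function.Surjective ev := by
    intro c
    classical
    refine ⟨Ideal.Quotient.mk I (Lagrange.interpolate S id
      (fun x => if h : x ∈ S then c ⟨x, h⟩ else 0)), ?_⟩
    funext μ
    have hinj : Set.InjOn (id : E → E) S := Function.injective_id.injOn
    have := Lagrange.eval_interpolate_at_node
      (fun x => if h : x ∈ S then c ⟨x, h⟩ else 0) hinj μ.2
    simp only [hev, AlgHom.toLinearMap_apply, Ideal.Quotient.liftₐ_apply,
      Ideal.Quotient.lift_mk]
    show (aeval (μ : E)) _ = c μ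
    rw [show (aeval (μ : E)) (Lagrange.interpolate S id
      (fun x => if h : x ∈ S then c ⟨x, h⟩ else 0)) = eval (μ : E) _ from rfl]
    rw [show (id (μ : E)) = (μ : E) from rfl] at this
    rw [this]
    simp [μ.2]
  -- rank-nullity
  have hrn := LinearMap.finrank_range_add_finrank_ker ev
  have hrange : Module.finrank E (LinearMap.range ev) = S.card := by
    rw [LinearMap.range_eq_top.mpr hsurj]
    rw [finrank_top]
    rw [Module.finrank_fintype_fun_eq_card]
    exact Fintype.card_coe S
  have hkerle : Module.finrank E
      (Ideal.span {Ideal.Quotient.mk I g}) ≤ Module.finrank E (LinearMap.ker ev) := by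
    have hle : (Ideal.span {Ideal.Quotient.mk I g}).restrictScalars E ≤ LinearMap.ker ev := by
      intro x hx
      rw [Submodule.restrictScalars_mem] at hx
      obtain ⟨y, rfl⟩ := Ideal.mem_span_singleton'.mp hx
      rw [LinearMap.mem_ker]
      have : ev (y * Ideal.Quotient.mk I g) = ev y * ev (Ideal.Quotient.mk I g) := by
        simp [hev, map_mul]
      rw [this]
      have hz : ev (Ideal.Quotient.mk I g) = 0 := by
        funext μ
        simp only [hev, AlgHom.toLinearMap_apply, Ideal.Quotient.liftₐ_apply,
          Ideal.Quotient.lift_mk]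
        show (aeval (μ : E)) g = (0 : E)
        rw [show (aeval (μ : E)) g = eval (μ : E) g from rfl]
        simpa using hvan μ μ.2
      rw [hz, mul_zero]
    exact Submodule.finrank_mono hle
  omega

lemma mem_prime_field {q : ℕ} [Fact q.Prime] {E : Type*} [Field E] [Algebra (ZMod q) E]
    {y : E} (hy : y ^ q = y) : ∃ a : ZMod q, algebraMap (ZMod q) E a = y := by
  classical
  have hq1 : 1 < q := (Fact.out : q.Prime).one_lt
  set P : E[X] := X ^ q - X with hP
  have hPdeg : P.natDegree = q := FiniteField.X_pow_card_sub_X_natDegree_eq E hq1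
  have hPne : P ≠ 0 := FiniteField.X_pow_card_sub_X_ne_zero E hq1
  have hcard : P.roots.toFinset.card ≤ q := by
    calc P.roots.toFinset.card ≤ Multiset.card P.roots := P.roots.toFinset_card_le
    _ ≤ P.natDegree := P.card_roots' 
    _ = q := hPdeg
  set img : Finset E := Finset.univ.image (algebraMap (ZMod q) E) with himg
  have himgcard : img.card = q := by
    rw [himg, Finset.card_image_of_injective _ (algebraMap (ZMod q) E).injective,
      Finset.card_univ, ZMod.card]
  have hsub : img ⊆ P.roots.toFinset := by
    intro z hz
    rw [himg, Finset.mem_image] at hz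
    obtain ⟨a, _, rfl⟩ := hz
    rw [Multiset.mem_toFinset, mem_roots hPne]
    simp only [IsRoot.def, hP, eval_sub, eval_pow, eval_X]
    rw [← map_pow, ZMod.pow_card, sub_self]
  have hy' : y ∈ P.roots.toFinset := by
    rw [Multiset.mem_toFinset, mem_roots hPne]
    simp [hP, IsRoot.def, hy]
  have heq : img = P.roots.toFinset :=
    Finset.eq_of_subset_of_card_le hsub (by omega)
  rw [← heq, himg, Finset.mem_image] at hy'
  obtain ⟨a, _, ha⟩ := hy'
  exact ⟨a, ha⟩

lemma support_sum_subset {E : Type*} [Field E] {ι : Type*} (s : Finset ι) (f : ι → E[X]) :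
    (∑ i ∈ s, f i).support ⊆ s.biUnion (fun i => (f i).support) := by
  classical
  induction s using Finset.induction_on with
  | empty => simp
  | insert _ _ h ih =>
      rw [Finset.sum_insert h, Finset.biUnion_insert]
      exact support_add.trans (Finset.union_subset_union (subset_refl _) ih)

lemma support_card_le {E : Type*} [Field E] (r : ℕ) (e : ℕ → ℕ) (a : E) :
    ((∑ i ∈ Finset.range r, (X : E[X]) ^ e i) + C a).support.card ≤ r + 1 := by
  classical
  calc ((∑ i ∈ Finset.range r, (X : E[X]) ^ e i) + C a).support.card
      ≤ ((∑ i ∈ Finset.range r, (X : E[X]) ^ e i).support ∪ (C a).support).card :=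
        Finset.card_le_card support_add
    _ ≤ (∑ i ∈ Finset.range r, (X : E[X]) ^ e i).support.card + (C a).support.card :=
        Finset.card_union_le _ _
    _ ≤ r + 1 := by
        gcongr
        · calc (∑ i ∈ Finset.range r, (X : E[X]) ^ e i).support.card
              ≤ ((Finset.range r).biUnion fun i => ((X : E[X]) ^ e i).support).card :=
                Finset.card_le_card (support_sum_subset _ _)
            _ ≤ ∑ i ∈ Finset.range r, ((X : E[X]) ^ e i).support.card :=
                Finset.card_biUnion_le
            _ ≤ ∑ _i ∈ Finset.range r, 1 := by
                refine Finset.sum_le_sum fun i _ => ?_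
                rw [X_pow_eq_monomial]
                exact Finset.card_le_card (support_monomial' _ _) |>.trans (by simp)
            _ = r := by simp
        · rcases eq_or_ne a 0 with h | h
          · simp [h]
          · simp [support_C h]

/-- Sudan's counterexample: for distinct primes `q < p`, `r = ord_p(q)` and `E = F_{q^r}`,
there is `α ∈ F_q` such that `f = T + α` (with `T = ∑_{i<r} X^{q^i}` the trace polynomial)
vanishes at `≥ p/q` of the `p`-th roots of unity in `E`; hence
`wt(f) + dim I_f ≤ r + 1 + (1 - 1/q)p`, and if `r < p/q` the uncertainty principle
`wt(f) + dim I_f ≥ p + 1` fails over `E`. -/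
theorem trace_counterexample (q p : ℕ) [Fact q.Prime] (hp : p.Prime) (hqp : q < p)
    (r : ℕ) (hr : r = orderOf ((q : ZMod p))) :
    ∃ α : ZMod q,
      ((p : ℝ) / q ≤
        ({μ : GaloisField q r | μ ^ p = 1 ∧
          ((∑ i ∈ Finset.range r, (X : Polynomial (GaloisField q r)) ^ (q ^ i)) +
            C (algebraMap (ZMod q) (GaloisField q r) α)).eval μ = 0}).ncard) ∧
      (((((∑ i ∈ Finset.range r, (X : Polynomial (GaloisField q r)) ^ (q ^ i)) +
            C (algebraMap (ZMod q) (GaloisField q r) α)).support.card : ℝ) +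
          (Module.finrank (GaloisField q r)
            (Ideal.span {Ideal.Quotient.mk
              (Ideal.span {(X : Polynomial (GaloisField q r)) ^ p - 1})
              ((∑ i ∈ Finset.range r, (X : Polynomial (GaloisField q r)) ^ (q ^ i)) +
                C (algebraMap (ZMod q) (GaloisField q r) α))}) : ℝ))
        ≤ r + 1 + (1 - 1 / (q : ℝ)) * p) ∧
      ((r : ℝ) < (p : ℝ) / q →
        ∃ f : Polynomial (GaloisField q r), f ≠ 0 ∧ f.natDegree < p ∧
          ((f.support.card : ℝ) +
            (Module.finrank (GaloisField q r)
              (Ideal.span {Ideal.Quotient.mk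
                (Ideal.span {(X : Polynomial (GaloisField q r)) ^ p - 1}) f}) : ℝ))
            < p + 1) := by
  classical
  haveI : Fact p.Prime := ⟨hp⟩
  have hq : q.Prime := Fact.out
  have hq1 : 1 < q := hq.one_lt
  have hp1 : 1 < p := hp.one_lt
  -- r is positive
  have hqp0 : (q : ZMod p) ≠ 0 := by
    have : ¬ (p ∣ q) := fun h => absurd (Nat.le_of_dvd hq.pos h) (not_le.mpr hqp)
    simpa [ZMod.natCast_eq_zero_iff] using this
  have hr0 : 0 < r := by
    rw [hr]
    have : IsUnit (q : ZMod p) := isUnit_iff_ne_zero.mpr hqp0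
    obtain ⟨u, hu⟩ := this
    rw [← hu, orderOf_units]
    exact orderOf_pos u
  -- p divides q ^ r - 1
  have hqr1 : 1 ≤ q ^ r := Nat.one_le_pow _ _ hq.pos
  have hdvd : p ∣ q ^ r - 1 := by
    have h1 : ((q : ZMod p)) ^ r = 1 := by rw [hr]; exact pow_orderOf_eq_one _
    have : ((q ^ r - 1 : ℕ) : ZMod p) = 0 := by
      rw [Nat.cast_sub hqr1]
      push_cast
      rw [h1, sub_self]
    exact (ZMod.natCast_eq_zero_iff _ _).mp this
  set E := GaloisField q r with hE
  haveI : Fintype E := Fintype.ofFinite _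
  have hcardE : Fintype.card E = q ^ r := by
    rw [← Nat.card_eq_fintype_card]
    exact GaloisField.card q r hr0.ne'
  -- a primitive p-th root of unity
  have hdvd' : p ∣ Fintype.card Eˣ := by
    rw [Fintype.card_units, hcardE]; exact hdvd
  obtain ⟨x, hx⟩ := exists_prime_orderOf_dvd_card (G := Eˣ) p hdvd'
  have hζ : IsPrimitiveRoot ((x : E)) p := by
    have hox : orderOf ((x : E)) = p := by rw [orderOf_units, hx]
    exact hox ▸ IsPrimitiveRoot.orderOf (x : E)
  have hs : (nthRootsFinset p (1 : E)).card = p := hζ.card_nthRootsFinset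
  set T : E[X] := ∑ i ∈ Finset.range r, (X : E[X]) ^ (q ^ i) with hT
  -- evaluation of T at a p-th root of unity lies in the prime field
  have hevalT : ∀ μ ∈ nthRootsFinset p (1 : E), eval μ T = ∑ i ∈ Finset.range r, μ ^ q ^ i := by
    intro μ _
    rw [hT, eval_finset_sum]
    simp
  have hfix : ∀ μ ∈ nthRootsFinset p (1 : E), (eval μ T) ^ q = eval μ T := by
    intro μ hμ
    have hμp : μ ^ p = 1 := (mem_nthRootsFinset hp.pos (1 : E)).mp hμ
    have hμr : μ ^ q ^ r = μ := by
      obtain ⟨k, hk⟩ := hdvd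
      have : q ^ r = p * k + 1 := by omega
      rw [this, pow_add, pow_mul, hμp, one_pow, one_mul, pow_one]
    rw [hevalT μ hμ, sum_pow_char]
    have hterm : ∀ i, (μ ^ q ^ i) ^ q = μ ^ q ^ (i + 1) := by
      intro i
      rw [← pow_mul, ← pow_succ]
    calc ∑ i ∈ Finset.range r, (μ ^ q ^ i) ^ q
        = ∑ i ∈ Finset.range r, μ ^ q ^ (i + 1) := by
          exact Finset.sum_congr rfl fun i _ => hterm i
      _ = ∑ i ∈ Finset.range r, μ ^ q ^ i := by
          have h1 := Finset.sum_range_succ (fun i => μ ^ q ^ i) r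
          have h2 := Finset.sum_range_succ' (fun i => μ ^ q ^ i) r
          rw [h1] at h2
          rw [pow_zero, pow_one, hμr] at h2
          exact add_right_cancel h2.symm
  -- the trace value function into ZMod q
  set c : E → ZMod q := fun y =>
    if h : ∃ a : ZMod q, algebraMap (ZMod q) E a = eval y T then h.choose else 0 with hc
  have hcspec : ∀ μ ∈ nthRootsFinset p (1 : E), algebraMap (ZMod q) E (c μ) = eval μ T := by
    intro μ hμ
    have h : ∃ a : ZMod q, algebraMap (ZMod q) E a = eval μ T :=
      mem_prime_field (hfix μ hμ)
    simp only [hc, dif_pos h]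
    exact h.choose_spec
  -- pigeonhole
  obtain ⟨α', -, hα'⟩ :=
    Finset.exists_le_card_fiber_of_nsmul_le_card_of_maps_to
      (s := nthRootsFinset p (1 : E)) (t := (Finset.univ : Finset (ZMod q))) (f := c)
      (fun a _ => Finset.mem_univ _) ⟨0, Finset.mem_univ 0⟩
      (b := (p : ℝ) / q)
      (by
        rw [Finset.card_univ, ZMod.card, hs, nsmul_eq_mul]
        rw [mul_div_cancel₀]
        positivity)
  set S : Finset E := {x ∈ nthRootsFinset p (1 : E) | c x = α'} with hS
  have hSsub : S ⊆ nthRootsFinset p (1 : E) := Finset.filter_subset _ _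
  have hSroot : ∀ μ ∈ S, μ ^ p = 1 := fun μ hμ =>
    (mem_nthRootsFinset hp.pos (1 : E)).mp (hSsub hμ)
  have hvan : ∀ μ ∈ S, eval μ (T + C (algebraMap (ZMod q) E (-α'))) = 0 := by
    intro μ hμ
    rw [eval_add, eval_C, ← hcspec μ (hSsub hμ), (Finset.mem_filter.mp hμ).2, map_neg,
      add_neg_cancel]
  have hkey := key_dim_bound E p hp.pos (T + C (algebraMap (ZMod q) E (-α'))) S hSroot hvan
  have hsupp := support_card_le r (fun i => q ^ i) (algebraMap (ZMod q) E (-α'))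
  have hq0R : (q : ℝ) ≠ 0 := by positivity
  refine ⟨-α', ?_, ?_, ?_⟩
  · -- first conjunct
    set A : Set E := {μ : E | μ ^ p = 1 ∧
      eval μ (T + C (algebraMap (ZMod q) E (-α'))) = 0} with hA
    have hsubA : (S : Set E) ⊆ A := fun μ hμ => ⟨hSroot μ hμ, hvan μ hμ⟩
    have hle : (S.card : ℝ) ≤ (A.ncard : ℝ) := by
      have := Set.ncard_le_ncard hsubA (Set.toFinite A)
      rw [Set.ncard_coe_finset] at this
      exact_mod_cast this
    exact hα'.trans hle
  · -- second conjunct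
    have h1 : ((T + C (algebraMap (ZMod q) E (-α'))).support.card : ℝ) ≤ r + 1 := by
      exact_mod_cast hsupp
    have h2 : (Module.finrank E (Ideal.span {Ideal.Quotient.mk
        (Ideal.span {(X : E[X]) ^ p - 1}) (T + C (algebraMap (ZMod q) E (-α')))}) : ℝ)
        + (S.card : ℝ) ≤ p := by exact_mod_cast hkey
    have h3 : (1 - 1 / (q : ℝ)) * p = p - p / q := by field_simp
    rw [h3]
    linarith [hα']
  · -- third conjunct
    intro hrp
    have hpowmod : ∀ μ : E, μ ^ p = 1 → ∀ a : ℕ, μ ^ (a % p) = μ ^ a := by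
      intro μ hμ a
      conv_rhs => rw [← Nat.mod_add_div a p]
      rw [pow_add, pow_mul, hμ, one_pow, mul_one]
    set f' : E[X] := (∑ i ∈ Finset.range r, (X : E[X]) ^ (q ^ i % p)) +
      C (algebraMap (ZMod q) E (-α')) with hf'
    have hvan' : ∀ μ ∈ S, eval μ f' = 0 := by
      intro μ hμ
      have : eval μ f' = eval μ (T + C (algebraMap (ZMod q) E (-α'))) := by
        rw [hf', hT, eval_add, eval_add, eval_finset_sum, eval_finset_sum]
        congr 1
        refine Finset.sum_congr rfl fun i _ => ?_
        simp only [eval_pow, eval_X]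
        exact hpowmod μ (hSroot μ hμ) (q ^ i)
      rw [this]
      exact hvan μ hμ
    have hkey' := key_dim_bound E p hp.pos f' S hSroot hvan'
    have hsupp' := support_card_le r (fun i => q ^ i % p) (algebraMap (ZMod q) E (-α'))
    have hordiff : ∀ i, i < r → i ≠ 0 → q ^ i % p ≠ 1 := by
      intro i hir hi0 h
      have h2 : ((q : ZMod p)) ^ i = 1 := by
        have := congrArg (fun m : ℕ => (m : ZMod p)) h
        simpa [ZMod.natCast_mod, Nat.cast_pow] using this
      have h3 : orderOf ((q : ZMod p)) ∣ i := orderOf_dvd_of_pow_eq_one h2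
      rw [← hr] at h3
      have := Nat.le_of_dvd (Nat.pos_of_ne_zero hi0) h3
      omega
    have hcoeff : f'.coeff 1 = 1 := by
      rw [hf', coeff_add, coeff_C, if_neg one_ne_zero, add_zero, finset_sum_coeff]
      have hterms : ∀ i ∈ Finset.range r,
          ((X : E[X]) ^ (q ^ i % p)).coeff 1 = if i = 0 then 1 else 0 := by
        intro i hi
        rw [coeff_X_pow]
        rcases eq_or_ne i 0 with rfl | hi0
        · rw [if_pos, if_pos rfl]
          rw [pow_zero, Nat.mod_eq_of_lt hp1]
        · rw [if_neg, if_neg hi0]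
          intro h
          exact hordiff i (Finset.mem_range.mp hi) hi0 h.symm
      rw [Finset.sum_congr rfl hterms, Finset.sum_ite_eq' (Finset.range r) 0 (fun _ => (1 : E)),
        if_pos (Finset.mem_range.mpr hr0)]
    have hf'ne : f' ≠ 0 := by
      intro h
      rw [h, coeff_zero] at hcoeff
      exact one_ne_zero hcoeff.symm
    have hdeg' : f'.natDegree < p := by
      have hle : f'.natDegree ≤ p - 1 := by
        rw [hf']
        apply (natDegree_add_le _ _).trans
        simp only [natDegree_C, max_le_iff]
        refine ⟨?_, by omega⟩
        apply natDegree_sum_le_of_forall_le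
        intro i _
        rw [natDegree_X_pow]
        have := Nat.mod_lt (q ^ i) hp.pos
        omega
      omega
    refine ⟨f', hf'ne, hdeg', ?_⟩
    have h1 : (f'.support.card : ℝ) ≤ r + 1 := by exact_mod_cast hsupp'
    have h2 : (Module.finrank E (Ideal.span {Ideal.Quotient.mk
        (Ideal.span {(X : E[X]) ^ p - 1}) f'}) : ℝ) + (S.card : ℝ) ≤ p := by
      exact_mod_cast hkey'
    linarith [hα']
end
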